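/- Let u, v ∈ ℝⁿ (or ℂⁿ) be nonzero vectors, ε ∈ [0,1], and let p_u(i) = |u(i)|²/‖u‖² be the length-squared distribution of u. Let p̃ be any probability distribution on {1,…,n} with total variation distance at most ε from p_u. Let ṽ ≥ ‖v‖ be a known bound, and define Γ = {i : |v(i)| ≥ (ṽ/(√(2ε)‖u‖))·|u(i)|}. Define the random variable X by sampling i ~ p̃ and outputting 0 if i ∈ Γ, and v(i)*‖u‖²/u(i)* otherwise. Then |E[X] − ⟨u,v⟩| ≤ 2√(2ε)·‖u‖·ṽ. -/

import Mathlib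

open Finset

set_option maxHeartbeats 1000000 in
/-- **Robust inner product estimator, bias bound.**
For nonzero `u v : ℂⁿ`, `ε ∈ [0,1]`, a distribution `p̃` within total variation `ε` of the
length-squared distribution `p_u`, and a known bound `ṽ ≥ ‖v‖`, define
`Γ = {i : |v i| ≥ (ṽ/(√(2ε)·‖u‖))·|u i|}` (written multiplied out) and the estimator `X`
that samples `i ~ p̃` and outputs `0` if `i ∈ Γ` and `v(i)* ‖u‖² / u(i)*` otherwise.
Then `|E[X] − ⟨u,v⟩| ≤ 2√(2ε)·‖u‖·ṽ`. -/
theorem robust_inner_product_bias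
    (n : ℕ) (u v : Fin n → ℂ) (hu : u ≠ 0) (hv : v ≠ 0)
    (ε : ℝ) (hε : ε ∈ Set.Icc (0:ℝ) 1)
    (ptilde : Fin n → ℝ)
    (hpt_nonneg : ∀ i, 0 ≤ ptilde i) (hpt_sum : ∑ i, ptilde i = 1)
    (nu : ℝ) (hnu : nu = Real.sqrt (∑ i, ‖u i‖ ^ 2))
    (hTV : (1/2) * ∑ i, |ptilde i - ‖u i‖ ^ 2 / nu ^ 2| ≤ ε)
    (vtilde : ℝ) (hvtilde : Real.sqrt (∑ i, ‖v i‖ ^ 2) ≤ vtilde) :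
    ‖(∑ i, if vtilde * ‖u i‖ ≤ Real.sqrt (2 * ε) * nu * ‖v i‖ then (0:ℂ)
        else (ptilde i : ℂ) * ((starRingEnd ℂ) (v i) * (nu:ℂ) ^ 2 / (starRingEnd ℂ) (u i)))
      - ∑ i, u i * (starRingEnd ℂ) (v i)‖
      ≤ 2 * Real.sqrt (2 * ε) * nu * vtilde := by
  obtain ⟨hε0, hε1⟩ := hε
  set s := Real.sqrt (2 * ε) with hs
  have hs0 : 0 ≤ s := Real.sqrt_nonneg _
  have hssq : s ^ 2 = 2 * ε := Real.sq_sqrt (by linarith)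
  -- positivity facts
  have hSu : 0 < ∑ i, ‖u i‖ ^ 2 := by
    obtain ⟨j, hj⟩ := Function.ne_iff.mp hu
    exact Finset.sum_pos' (fun i _ => by positivity)
      ⟨j, Finset.mem_univ j, by have := norm_pos_iff.mpr hj; positivity⟩
  have hnu_pos : 0 < nu := by rw [hnu]; exact Real.sqrt_pos.mpr hSu
  have hSv : 0 < ∑ i, ‖v i‖ ^ 2 := by
    obtain ⟨j, hj⟩ := Function.ne_iff.mp hv
    exact Finset.sum_pos' (fun i _ => by positivity)
      ⟨j, Finset.mem_univ j, by have := norm_pos_iff.mpr hj; positivity⟩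
  have hvt : 0 < vtilde := lt_of_lt_of_le (Real.sqrt_pos.mpr hSv) hvtilde
  have hSvle : ∑ i, ‖v i‖ ^ 2 ≤ vtilde ^ 2 := by
    calc ∑ i, ‖v i‖ ^ 2 = (Real.sqrt (∑ i, ‖v i‖ ^ 2)) ^ 2 :=
          (Real.sq_sqrt hSv.le).symm
      _ ≤ vtilde ^ 2 := pow_le_pow_left₀ (Real.sqrt_nonneg _) hvtilde 2
  -- abbreviations
  set d : Fin n → ℝ := fun i => ptilde i - ‖u i‖ ^ 2 / nu ^ 2 with hd
  -- key identity: rewrite the difference as a single sum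
  have key : (∑ i, if vtilde * ‖u i‖ ≤ s * nu * ‖v i‖ then (0:ℂ)
        else (ptilde i : ℂ) * ((starRingEnd ℂ) (v i) * (nu:ℂ) ^ 2 / (starRingEnd ℂ) (u i)))
      - ∑ i, u i * (starRingEnd ℂ) (v i)
      = ∑ i, (if vtilde * ‖u i‖ ≤ s * nu * ‖v i‖ then -(u i * (starRingEnd ℂ) (v i))
        else ((d i : ℝ) : ℂ) * ((starRingEnd ℂ) (v i) * (nu:ℂ) ^ 2 / (starRingEnd ℂ) (u i))) := by
    rw [← Finset.sum_sub_distrib]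
    refine Finset.sum_congr rfl fun i _ => ?_
    by_cases hP : vtilde * ‖u i‖ ≤ s * nu * ‖v i‖
    · rw [if_pos hP, if_pos hP]; ring
    · have hui : u i ≠ 0 := by
        intro h0
        exact hP (by rw [h0]; simpa using by positivity)
      have hcui : (starRingEnd ℂ) (u i) ≠ 0 := by simpa using hui
      have hnuc : (nu : ℂ) ≠ 0 := by exact_mod_cast hnu_pos.ne'
      have hmc : u i * (starRingEnd ℂ) (u i) = ((‖u i‖ : ℝ) : ℂ) ^ 2 :=
        RCLike.mul_conj (u i)
      rw [if_neg hP, if_neg hP]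
      simp only [hd]
      push_cast
      field_simp
      linear_combination (-(starRingEnd ℂ) (v i)) * hmc
  rw [key]
  have hTV2 : ∑ i, |d i| ≤ 2 * ε := by
    simp only [hd]; linarith
  rcases eq_or_lt_of_le hε0 with hε0' | hεpos
  · -- ε = 0: everything vanishes
    have hs0' : s = 0 := by rw [hs, ← hε0']; simp
    have hdz : ∀ i, d i = 0 := by
      intro i
      have hsum0 : ∑ i, |d i| = 0 := le_antisymm (by rw [← hε0'] at hTV2; linarith)
        (Finset.sum_nonneg fun i _ => abs_nonneg _)
      have := (Finset.sum_eq_zero_iff_of_nonneg (fun i _ => abs_nonneg (d i))).mp hsum0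
        i (Finset.mem_univ i)
      exact abs_eq_zero.mp this
    have : ∀ i ∈ Finset.univ, (if vtilde * ‖u i‖ ≤ s * nu * ‖v i‖
        then -(u i * (starRingEnd ℂ) (v i))
        else ((d i : ℝ) : ℂ) * ((starRingEnd ℂ) (v i) * (nu:ℂ) ^ 2 / (starRingEnd ℂ) (u i)))
        = 0 := by
      intro i _
      by_cases hP : vtilde * ‖u i‖ ≤ s * nu * ‖v i‖
      · have hu0 : ‖u i‖ = 0 := by
          rw [hs0'] at hP
          nlinarith [norm_nonneg (u i), norm_nonneg (v i)]
        rw [if_pos hP, norm_eq_zero.mp hu0]; ring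
      · rw [if_neg hP, hdz i]; simp
    rw [Finset.sum_congr rfl this]
    simp [hs0']
  · -- ε > 0
    have hspos : 0 < s := Real.sqrt_pos.mpr (by linarith)
    have bound : ∀ i ∈ Finset.univ, ‖(if vtilde * ‖u i‖ ≤ s * nu * ‖v i‖
        then -(u i * (starRingEnd ℂ) (v i))
        else ((d i : ℝ) : ℂ) * ((starRingEnd ℂ) (v i) * (nu:ℂ) ^ 2 / (starRingEnd ℂ) (u i)))‖
        ≤ (s * nu / vtilde) * ‖v i‖ ^ 2 + (nu * vtilde / s) * |d i| := by
      intro i _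
      by_cases hP : vtilde * ‖u i‖ ≤ s * nu * ‖v i‖
      · rw [if_pos hP, norm_neg, norm_mul, RCLike.norm_conj]
        have h1 : ‖u i‖ * ‖v i‖ ≤ (s * nu / vtilde) * ‖v i‖ ^ 2 := by
          rw [div_mul_eq_mul_div, le_div_iff₀ hvt]
          nlinarith [norm_nonneg (v i), mul_le_mul_of_nonneg_right hP (norm_nonneg (v i))]
        have h2 : 0 ≤ (nu * vtilde / s) * |d i| := by positivity
        linarith
      · rw [if_neg hP]
        have hui : u i ≠ 0 := by
          intro h0
          exact hP (by rw [h0]; simpa using by positivity)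
        have hu0 : 0 < ‖u i‖ := norm_pos_iff.mpr hui
        have hlt : s * nu * ‖v i‖ ≤ vtilde * ‖u i‖ := (not_le.mp hP).le
        have hnorm : ‖((d i : ℝ) : ℂ) * ((starRingEnd ℂ) (v i) * (nu:ℂ) ^ 2 / (starRingEnd ℂ) (u i))‖
            = |d i| * (‖v i‖ * nu ^ 2 / ‖u i‖) := by
          rw [norm_mul, norm_div, norm_mul, RCLike.norm_conj, RCLike.norm_conj,
            Complex.norm_real, norm_pow, Complex.norm_real, Real.norm_eq_abs,
            Real.norm_eq_abs, abs_of_pos hnu_pos]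
        rw [hnorm]
        have h3 : ‖v i‖ * nu ^ 2 / ‖u i‖ ≤ nu * vtilde / s := by
          rw [div_le_div_iff₀ hu0 hspos]
          nlinarith [mul_le_mul_of_nonneg_left hlt hnu_pos.le]
        have h4 : |d i| * (‖v i‖ * nu ^ 2 / ‖u i‖) ≤ (nu * vtilde / s) * |d i| := by
          rw [mul_comm (nu * vtilde / s) (|d i|)]
          exact mul_le_mul_of_nonneg_left h3 (abs_nonneg _)
        have h5 : 0 ≤ (s * nu / vtilde) * ‖v i‖ ^ 2 := by positivity
        linarith
    calc ‖∑ i, (if vtilde * ‖u i‖ ≤ s * nu * ‖v i‖ then -(u i * (starRingEnd ℂ) (v i))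
          else ((d i : ℝ) : ℂ) * ((starRingEnd ℂ) (v i) * (nu:ℂ) ^ 2 / (starRingEnd ℂ) (u i)))‖
        ≤ ∑ i, ‖(if vtilde * ‖u i‖ ≤ s * nu * ‖v i‖ then -(u i * (starRingEnd ℂ) (v i))
          else ((d i : ℝ) : ℂ) * ((starRingEnd ℂ) (v i) * (nu:ℂ) ^ 2 / (starRingEnd ℂ) (u i)))‖ :=
          norm_sum_le _ _
      _ ≤ ∑ i, ((s * nu / vtilde) * ‖v i‖ ^ 2 + (nu * vtilde / s) * |d i|) :=
          Finset.sum_le_sum bound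
      _ = (s * nu / vtilde) * (∑ i, ‖v i‖ ^ 2) + (nu * vtilde / s) * (∑ i, |d i|) := by
          rw [Finset.sum_add_distrib, ← Finset.mul_sum, ← Finset.mul_sum]
      _ ≤ (s * nu / vtilde) * vtilde ^ 2 + (nu * vtilde / s) * (2 * ε) := by
          gcongr <;> positivity
      _ = 2 * s * nu * vtilde := by
          rw [← hssq]; field_simp; ring
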